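/- arXiv:1511.00512 — 3 statements merged into one kernel-verified Lean document; each statement's English description precedes it below -/
import Mathlib

section
/- Let f : M → ℝ be a C² function on a compact Riemannian manifold and φ a function with f = (τ - |φ|²)/2, satisfying Δf + |φ|²·f = g where g ≥ 0 (Δ the positive Laplacian). Then f ≥ 0 everywhere; equivalently |φ|² ≤ τ. -/
/- STATEMENT 4 (Bradlow's maximum-principle bound): on a compact space, if f = (τ-|φ|²)/2
satisfies Δf + |φ|²f = g with g ≥ 0, where Δ is the positive Laplacian (abstracted by the
property that Δf ≤ 0 at any minimum point of f), then f ≥ 0, equivalently |φ|² ≤ τ. -/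
theorem stmt4 {M : Type*} [TopologicalSpace M] [CompactSpace M] [Nonempty M]
    (τ : ℝ) (hτ : 0 < τ) (f lapf g : M → ℝ) (φ : M → ℂ)
    (hf : Continuous f)
    (hmin : ∀ x, IsMinOn f Set.univ x → lapf x ≤ 0)
    (heq : ∀ x, lapf x + ‖φ x‖ ^ 2 * f x = g x)
    (hg : ∀ x, 0 ≤ g x)
    (hfdef : ∀ x, f x = (τ - ‖φ x‖ ^ 2) / 2) :
    ∀ x, 0 ≤ f x ∧ ‖φ x‖ ^ 2 ≤ τ := by
  obtain ⟨x₀, -, hx₀⟩ := IsCompact.exists_isMinOn isCompact_univ Set.univ_nonempty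
    (hf.continuousOn)
  have hlap := hmin x₀ hx₀
  have h1 : 0 ≤ ‖φ x₀‖ ^ 2 * f x₀ := by
    have := heq x₀; have := hg x₀; linarith
  have h0 : 0 ≤ f x₀ := by
    by_contra h
    push_neg at h
    have hφ : 0 < ‖φ x₀‖ ^ 2 := by
      have := hfdef x₀; nlinarith
    nlinarith
  intro x
  have hfx : 0 ≤ f x := le_trans h0 (hx₀ (Set.mem_univ x))
  exact ⟨hfx, by have := hfdef x; linarith⟩
end

section
/- Let τ₀ = 4πd/Area(Σ) for a closed surface Σ of area Area(Σ) and a positive integer d. If τ < τ₀, then there is no pair (∇, φ) satisfying iΛF_∇ = (τ - |φ|²)/2 with ∫_Σ iΛF_∇ ω = 2πd. -/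
open MeasureTheory

/- STATEMENT 6 (nonexistence below the Bradlow limit τ₀ = 4πd/Area): if τ·Area(Σ) < 4πd
then there is no pair (iΛF, φ) with iΛF = (τ-|φ|²)/2 and ∫ iΛF = 2πd. -/
theorem stmt6 {S : Type*} [MeasurableSpace S] (μ : Measure S) [IsFiniteMeasure μ]
    (τ : ℝ) (d : ℕ) (hd : 0 < d)
    (harea : 0 < (μ Set.univ).toReal)
    (hτ : τ * (μ Set.univ).toReal < 4 * Real.pi * d) :
    ¬ ∃ (iLF : S → ℝ) (φ : S → ℂ),
        Integrable (fun x => ‖φ x‖ ^ 2) μ ∧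
        (∀ x, iLF x = (τ - ‖φ x‖ ^ 2) / 2) ∧
        ∫ x, iLF x ∂μ = 2 * Real.pi * d := by
  rintro ⟨iLF, φ, hint, heq, hI⟩
  have hfun : iLF = fun x => (τ - ‖φ x‖ ^ 2) / 2 := funext heq
  rw [hfun] at hI
  have hint2 : Integrable (fun x => (τ - ‖φ x‖ ^ 2) / 2) μ :=
    ((integrable_const τ).sub hint).div_const 2
  have hsub : ∫ x, (τ - ‖φ x‖ ^ 2) / 2 ∂μ
      = (τ * (μ Set.univ).toReal - ∫ x, ‖φ x‖ ^ 2 ∂μ) / 2 := by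
    rw [integral_div, integral_sub (integrable_const τ) hint, integral_const, measureReal_def, smul_eq_mul,
      mul_comm]
  have hnn : 0 ≤ ∫ x, ‖φ x‖ ^ 2 ∂μ :=
    integral_nonneg fun x => sq_nonneg _
  rw [hsub] at hI
  nlinarith [hI, hnn, hτ]
end

section
/- Let A and B be compactly supported C¹ functions on ℝ², and let f : ℝ² → ℝ be the function equal to 0 on the open upper-left quadrant, 1 on the open upper-right and lower-left quadrants, and 2 on the open lower-right quadrant. Then ∫_{ℝ²} f·(∂A/∂y - ∂B/∂x) dx dy = ∫_{-∞}^{∞} A(x, 0) dx + ∫_{-∞}^{∞} B(0, y) dy. -/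
open MeasureTheory Set Filter

/-- slice in y has compact support -/
lemma slice_y_compact (A : ℝ × ℝ → ℝ) (hAc : HasCompactSupport A) (x : ℝ) :
    HasCompactSupport (fun y => A (x, y)) := by
  obtain ⟨r, hr⟩ := hAc.isBounded.subset_closedBall 0
  apply HasCompactSupport.intro (isCompact_Icc (a := -r) (b := r))
  intro y hy
  have hy' : r < |y| := by
    simp only [mem_Icc, not_and_or, not_le] at hy
    rw [lt_abs]
    rcases hy with h | h
    · right; linarith
    · left; exact h
  have : (x, y) ∉ tsupport A := by
    intro hmem
    have := hr hmem
    rw [Metric.mem_closedBall] at this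
    have hle : |y| ≤ dist (x, y) (0 : ℝ × ℝ) := by
      rw [Prod.dist_eq]
      simpa using le_max_right (dist x (0:ℝ)) (dist y (0:ℝ))
    linarith
  exact image_eq_zero_of_notMem_tsupport this

/-- slice in x has compact support -/
lemma slice_x_compact (B : ℝ × ℝ → ℝ) (hBc : HasCompactSupport B) (y : ℝ) :
    HasCompactSupport (fun x => B (x, y)) := by
  obtain ⟨r, hr⟩ := hBc.isBounded.subset_closedBall 0
  apply HasCompactSupport.intro (isCompact_Icc (a := -r) (b := r))
  intro x hx
  have hx' : r < |x| := by
    simp only [mem_Icc, not_and_or, not_le] at hx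
    rw [lt_abs]
    rcases hx with h | h
    · right; linarith
    · left; exact h
  have : (x, y) ∉ tsupport B := by
    intro hmem
    have := hr hmem
    rw [Metric.mem_closedBall] at this
    have hle : |x| ≤ dist (x, y) (0 : ℝ × ℝ) := by
      rw [Prod.dist_eq]
      simpa using le_max_left (dist x (0:ℝ)) (dist y (0:ℝ))
    linarith
  exact image_eq_zero_of_notMem_tsupport this

/-- key one-dimensional computation, y-version -/
lemma key_y (a : ℝ → ℝ) (ha : ContDiff ℝ 1 a) (hc : HasCompactSupport a) (c : ℝ) :
    ∫ y : ℝ, (c + (if y < 0 then (1:ℝ) else 0)) * deriv a y = a 0 := by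
  have hder : Continuous (deriv a) := ha.continuous_deriv le_rfl
  have hint : Integrable (deriv a) := hder.integrable_of_hasCompactSupport hc.deriv
  have hIic : ∫ y in Iic (0:ℝ), deriv a y = a 0 :=
    HasCompactSupport.integral_Iic_deriv_eq ha hc 0
  have hIoi : ∫ y in Ioi (0:ℝ), deriv a y = - a 0 :=
    HasCompactSupport.integral_Ioi_deriv_eq ha hc 0
  have htot : ∫ y : ℝ, deriv a y = 0 := by
    rw [← intervalIntegral.integral_Iic_add_Ioi hint.integrableOn hint.integrableOn, hIic, hIoi]; ring
  have hind : ∫ y : ℝ, (if y < 0 then (1:ℝ) else 0) * deriv a y = a 0 := by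
    have : (fun y : ℝ => (if y < 0 then (1:ℝ) else 0) * deriv a y)
        = (Iio (0:ℝ)).indicator (deriv a) := by
      ext y
      by_cases h : y < 0 <;> simp [indicator, h, mem_Iio]
    rw [this, integral_indicator measurableSet_Iio, ← integral_Iic_eq_integral_Iio, hIic]
  have hsplit : (fun y : ℝ => (c + (if y < 0 then (1:ℝ) else 0)) * deriv a y)
      = fun y => c * deriv a y + (if y < 0 then (1:ℝ) else 0) * deriv a y := by
    ext y; ring
  rw [hsplit, integral_add (hint.const_mul c)]
  · rw [integral_const_mul, htot, hind]; ring
  · apply hint.bdd_mul (c := 1)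
    · exact (Measurable.ite measurableSet_Iio measurable_const measurable_const).aestronglyMeasurable
    · exact Filter.Eventually.of_forall fun y => by by_cases h : y < 0 <;> simp [h]

/-- key one-dimensional computation, x-version -/
lemma key_x (b : ℝ → ℝ) (hb : ContDiff ℝ 1 b) (hc : HasCompactSupport b) (c : ℝ) :
    ∫ x : ℝ, ((if 0 < x then (1:ℝ) else 0) + c) * deriv b x = - b 0 := by
  have hder : Continuous (deriv b) := hb.continuous_deriv le_rfl
  have hint : Integrable (deriv b) := hder.integrable_of_hasCompactSupport hc.deriv
  have hIic : ∫ x in Iic (0:ℝ), deriv b x = b 0 :=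
    HasCompactSupport.integral_Iic_deriv_eq hb hc 0
  have hIoi : ∫ x in Ioi (0:ℝ), deriv b x = - b 0 :=
    HasCompactSupport.integral_Ioi_deriv_eq hb hc 0
  have htot : ∫ x : ℝ, deriv b x = 0 := by
    rw [← intervalIntegral.integral_Iic_add_Ioi hint.integrableOn hint.integrableOn, hIic, hIoi]; ring
  have hind : ∫ x : ℝ, (if 0 < x then (1:ℝ) else 0) * deriv b x = - b 0 := by
    have : (fun x : ℝ => (if 0 < x then (1:ℝ) else 0) * deriv b x)
        = (Ioi (0:ℝ)).indicator (deriv b) := by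
      ext x
      by_cases h : 0 < x <;> simp [indicator, h, mem_Ioi]
    rw [this, integral_indicator measurableSet_Ioi, hIoi]
  have hsplit : (fun x : ℝ => ((if 0 < x then (1:ℝ) else 0) + c) * deriv b x)
      = fun x => (if 0 < x then (1:ℝ) else 0) * deriv b x + c * deriv b x := by
    ext x; ring
  rw [hsplit, integral_add _ (hint.const_mul c)]
  · rw [integral_const_mul, htot, hind]; ring
  · apply hint.bdd_mul (c := 1)
    · exact (Measurable.ite measurableSet_Ioi measurable_const measurable_const).aestronglyMeasurable
    · exact Filter.Eventually.of_forall fun x => by by_cases h : 0 < x <;> simp [h]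

theorem stmt10 (A B : ℝ × ℝ → ℝ) (hA : ContDiff ℝ 1 A) (hB : ContDiff ℝ 1 B)
    (hAc : HasCompactSupport A) (hBc : HasCompactSupport B)
    (f : ℝ × ℝ → ℝ)
    (hUL : ∀ p : ℝ × ℝ, p.1 < 0 → 0 < p.2 → f p = 0)
    (hUR : ∀ p : ℝ × ℝ, 0 < p.1 → 0 < p.2 → f p = 1)
    (hLL : ∀ p : ℝ × ℝ, p.1 < 0 → p.2 < 0 → f p = 1)
    (hLR : ∀ p : ℝ × ℝ, 0 < p.1 → p.2 < 0 → f p = 2) :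
    ∫ p : ℝ × ℝ, f p * (fderiv ℝ A p (0, 1) - fderiv ℝ B p (1, 0))
      = (∫ x : ℝ, A (x, 0)) + ∫ y : ℝ, B (0, y) := by
  classical
  set g : ℝ × ℝ → ℝ :=
    fun p => (if 0 < p.1 then (1:ℝ) else 0) + (if p.2 < 0 then (1:ℝ) else 0) with hg_def
  set DA : ℝ × ℝ → ℝ := fun p => fderiv ℝ A p (0, 1) with hDA_def
  set DB : ℝ × ℝ → ℝ := fun p => fderiv ℝ B p (1, 0) with hDB_def
  -- continuity / support / integrability of the derivatives
  have hDAcont : Continuous DA := (hA.continuous_fderiv one_ne_zero).clm_apply continuous_const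
  have hDBcont : Continuous DB := (hB.continuous_fderiv one_ne_zero).clm_apply continuous_const
  have hDAsupp : HasCompactSupport DA := hAc.fderiv_apply ℝ (0, 1)
  have hDBsupp : HasCompactSupport DB := hBc.fderiv_apply ℝ (1, 0)
  have hDAint : Integrable DA := hDAcont.integrable_of_hasCompactSupport hDAsupp
  have hDBint : Integrable DB := hDBcont.integrable_of_hasCompactSupport hDBsupp
  -- g is measurable and bounded
  have hgmeas : Measurable g := by
    apply Measurable.add
    · exact Measurable.ite
        ((isOpen_lt continuous_const continuous_fst).measurableSet)
        measurable_const measurable_const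
    · exact Measurable.ite
        ((isOpen_lt continuous_snd continuous_const).measurableSet)
        measurable_const measurable_const
  have hgbdd : ∃ C : ℝ, ∀ p : ℝ × ℝ, ‖g p‖ ≤ C := by
    refine ⟨2, fun p => ?_⟩
    simp only [hg_def, Real.norm_eq_abs]
    by_cases h1 : 0 < p.1 <;> by_cases h2 : p.2 < 0 <;> simp [h1, h2] <;> norm_num
  have hgDA : Integrable (fun p => g p * DA p) :=
    hDAint.bdd_mul hgmeas.aestronglyMeasurable (Filter.Eventually.of_forall hgbdd.choose_spec)
  have hgDB : Integrable (fun p => g p * DB p) :=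
    hDBint.bdd_mul hgmeas.aestronglyMeasurable (Filter.Eventually.of_forall hgbdd.choose_spec)
  -- f = g almost everywhere
  have hax : (volume : Measure (ℝ × ℝ)) {p : ℝ × ℝ | p.1 = 0} = 0 := by
    have : {p : ℝ × ℝ | p.1 = 0} = ({0} : Set ℝ) ×ˢ (univ : Set ℝ) := by
      ext p
      simp only [mem_setOf_eq, Set.mem_prod, mem_singleton_iff, mem_univ, and_true]
    rw [this, Measure.volume_eq_prod, Measure.prod_prod]; simp
  have hay : (volume : Measure (ℝ × ℝ)) {p : ℝ × ℝ | p.2 = 0} = 0 := by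
    have : {p : ℝ × ℝ | p.2 = 0} = (univ : Set ℝ) ×ˢ ({0} : Set ℝ) := by
      ext p
      simp only [mem_setOf_eq, Set.mem_prod, mem_singleton_iff, mem_univ, true_and]
    rw [this, Measure.volume_eq_prod, Measure.prod_prod]; simp
  have hfg : f =ᵐ[volume] g := by
    have h1 : ∀ᵐ p : ℝ × ℝ, p.1 ≠ 0 := by
      rw [ae_iff]; simpa using hax
    have h2 : ∀ᵐ p : ℝ × ℝ, p.2 ≠ 0 := by
      rw [ae_iff]; simpa using hay
    filter_upwards [h1, h2] with p hp1 hp2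
    rcases hp1.lt_or_gt with hx | hx <;> rcases hp2.lt_or_gt with hy | hy
    · rw [hLL p hx hy]; simp [hg_def, not_lt.2 hx.le, hy]
    · rw [hUL p hx hy]; simp [hg_def, not_lt.2 hx.le, not_lt.2 hy.le]
    · rw [hLR p hx hy]; simp [hg_def, hx, hy]; norm_num
    · rw [hUR p hx hy]; simp [hg_def, hx, not_lt.2 hy.le]
  -- replace f by g
  have hstep1 : ∫ p : ℝ × ℝ, f p * (DA p - DB p) = ∫ p : ℝ × ℝ, g p * (DA p - DB p) := by
    apply integral_congr_ae
    filter_upwards [hfg] with p hp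
    rw [hp]
  rw [hstep1]
  have hsplit : ∫ p : ℝ × ℝ, g p * (DA p - DB p)
      = (∫ p : ℝ × ℝ, g p * DA p) - ∫ p : ℝ × ℝ, g p * DB p := by
    rw [← integral_sub hgDA hgDB]
    congr 1; ext p; ring
  rw [hsplit]
  -- the A term
  have hAterm : ∫ p : ℝ × ℝ, g p * DA p = ∫ x : ℝ, A (x, 0) := by
    have hprod : Integrable (fun p : ℝ × ℝ => g p * DA p) (volume.prod volume) := by
      rwa [← Measure.volume_eq_prod]
    rw [Measure.volume_eq_prod, integral_prod _ hprod]
    apply integral_congr_ae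
    filter_upwards with x
    have ha : ContDiff ℝ 1 (fun y => A (x, y)) :=
      hA.comp (contDiff_const.prodMk contDiff_id)
    have hac : HasCompactSupport (fun y => A (x, y)) := slice_y_compact A hAc x
    have hda : ∀ y : ℝ, HasDerivAt (fun y => A (x, y)) (DA (x, y)) y := by
      intro y
      exact ((hA.differentiable one_ne_zero (x, y)).hasFDerivAt).comp_hasDerivAt y
        (HasDerivAt.prodMk (hasDerivAt_const y x) (hasDerivAt_id y))
    have : ∫ y : ℝ, g (x, y) * DA (x, y)
        = ∫ y : ℝ, ((if 0 < x then (1:ℝ) else 0) + (if y < 0 then (1:ℝ) else 0))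
            * deriv (fun y => A (x, y)) y := by
      congr 1; ext y
      rw [(hda y).deriv]
    rw [this, key_y _ ha hac]
  -- the B term
  have hBterm : ∫ p : ℝ × ℝ, g p * DB p = - ∫ y : ℝ, B (0, y) := by
    have hprod : Integrable (fun p : ℝ × ℝ => g p * DB p) (volume.prod volume) := by
      rwa [← Measure.volume_eq_prod]
    rw [Measure.volume_eq_prod, integral_prod_symm _ hprod]
    rw [← integral_neg]
    apply integral_congr_ae
    filter_upwards with y
    have hb : ContDiff ℝ 1 (fun x => B (x, y)) :=
      hB.comp (contDiff_id.prodMk contDiff_const)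
    have hbc : HasCompactSupport (fun x => B (x, y)) := slice_x_compact B hBc y
    have hdb : ∀ x : ℝ, HasDerivAt (fun x => B (x, y)) (DB (x, y)) x := by
      intro x
      exact ((hB.differentiable one_ne_zero (x, y)).hasFDerivAt).comp_hasDerivAt x
        (HasDerivAt.prodMk (hasDerivAt_id x) (hasDerivAt_const x y))
    have : ∫ x : ℝ, g (x, y) * DB (x, y)
        = ∫ x : ℝ, ((if 0 < x then (1:ℝ) else 0) + (if y < 0 then (1:ℝ) else 0))
            * deriv (fun x => B (x, y)) x := by
      congr 1; ext x
      rw [(hdb x).deriv]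
    rw [this, key_x _ hb hbc]
  rw [hAterm, hBterm]
  ring
end
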